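/- Let T ∈ U(n,1) be a non-vertical translation, i.e., a unipotent element with (T − 1)³ = 0 and (T − 1)² ≠ 0. Then T is a product of two involutions in U(n,1); that is, there exist involutions J₁, J₂ ∈ U(n,1) with T = J₁J₂. -/

import Mathlib

open Matrix

/-- The signature matrix `J = diag(-1, 1, …, 1)` of the Hermitian form on `ℂ^{n,1}`. -/
noncomputable def Jform (n : ℕ) : Matrix (Fin (n + 1)) (Fin (n + 1)) ℂ :=
  Matrix.diagonal (fun i => if i = 0 then (-1 : ℂ) else 1)

/-- Membership in `U(n,1)`: `Aᴴ J A = J`. -/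
def memU1 (n : ℕ) (A : Matrix (Fin (n + 1)) (Fin (n + 1)) ℂ) : Prop :=
  Aᴴ * Jform n * A = Jform n

/-- Membership in `SU(n,1)`: `Aᴴ J A = J` and `det A = 1`. -/
def memSU1 (n : ℕ) (A : Matrix (Fin (n + 1)) (Fin (n + 1)) ℂ) : Prop :=
  Aᴴ * Jform n * A = Jform n ∧ A.det = 1

namespace NVT

noncomputable def phi (n : ℕ) (p q : Fin (n + 1) → ℂ) : ℂ :=
  star p ⬝ᵥ (Jform n *ᵥ q)

variable {n : ℕ}

lemma phi_eq (p q : Fin (n+1) → ℂ) :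
    phi n p q = ∑ i, (starRingEnd ℂ) (p i) * ((if i = 0 then (-1:ℂ) else 1) * q i) := by
  simp [phi, dotProduct, Jform, mulVec_diagonal, Pi.star_apply, RCLike.star_def]

lemma phi_conj (p q : Fin (n+1) → ℂ) : phi n p q = (starRingEnd ℂ) (phi n q p) := by
  rw [phi_eq, phi_eq, map_sum]
  refine Finset.sum_congr rfl fun i _ => ?_
  rcases eq_or_ne i 0 with h | h <;> simp [h] <;> ring

lemma phi_add_left (p p' q : Fin (n+1) → ℂ) :
    phi n (p + p') q = phi n p q + phi n p' q := by
  simp [phi, star_add, add_dotProduct]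

lemma phi_add_right (p q q' : Fin (n+1) → ℂ) :
    phi n p (q + q') = phi n p q + phi n p q' := by
  simp [phi, mulVec_add, dotProduct_add]

lemma phi_sub_left (p p' q : Fin (n+1) → ℂ) :
    phi n (p - p') q = phi n p q - phi n p' q := by
  simp [phi, star_sub, sub_dotProduct]

lemma phi_sub_right (p q q' : Fin (n+1) → ℂ) :
    phi n p (q - q') = phi n p q - phi n p q' := by
  simp [phi, mulVec_sub, dotProduct_sub]

lemma phi_smul_left (c : ℂ) (p q : Fin (n+1) → ℂ) :
    phi n (c • p) q = (starRingEnd ℂ) c * phi n p q := by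
  simp [phi, star_smul, smul_dotProduct, smul_eq_mul, RCLike.star_def]

lemma phi_smul_right (c : ℂ) (p q : Fin (n+1) → ℂ) :
    phi n p (c • q) = c * phi n p q := by
  simp [phi, mulVec_smul, dotProduct_smul, smul_eq_mul]

lemma phi_zero_right (p : Fin (n+1) → ℂ) : phi n p 0 = 0 := by
  simp [phi_eq]

lemma phi_neg_right (p q : Fin (n+1) → ℂ) : phi n p (-q) = - phi n p q := by
  have := phi_smul_right (n := n) (-1) p q
  simpa using this

lemma stardot (p q : Fin (n+1) → ℂ) : star (Jform n *ᵥ p) ⬝ᵥ q = phi n p q := by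
  rw [phi_eq]
  simp only [dotProduct, Pi.star_apply, Jform, mulVec_diagonal, RCLike.star_def]
  refine Finset.sum_congr rfl fun i _ => ?_
  rcases eq_or_ne i 0 with h | h <;> simp [h] <;> ring

lemma starvecmul (u : Fin (n+1) → ℂ) :
    star u ᵥ* Jform n = star (Jform n *ᵥ u) := by
  funext i
  simp only [Jform, vecMul_diagonal, mulVec_diagonal, Pi.star_apply, RCLike.star_def]
  rcases eq_or_ne i 0 with h | h <;> simp [h] <;> ring

lemma JJ : Jform n * Jform n = 1 := by
  ext i j
  rcases eq_or_ne i j with rfl | hij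
  · rw [Jform, diagonal_mul_diagonal, diagonal_apply_eq, one_apply_eq]
    rcases eq_or_ne i 0 with h | h <;> simp [h]
  · rw [Jform, diagonal_mul_diagonal, diagonal_apply_ne _ hij, one_apply_ne hij]

lemma phi_self (p : Fin (n+1) → ℂ) :
    phi n p p = -(Complex.normSq (p 0) : ℂ) + ∑ i : Fin n, (Complex.normSq (p i.succ) : ℂ) := by
  rw [phi_eq, Fin.sum_univ_succ]
  simp only [if_pos rfl]
  congr 1
  · rw [Complex.normSq_eq_conj_mul_self]; push_cast; ring
  · refine Finset.sum_congr rfl fun i _ => ?_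
    rw [if_neg (Fin.succ_ne_zero i), Complex.normSq_eq_conj_mul_self]; push_cast; ring

lemma eq_zero_of_isotropic_head (p : Fin (n+1) → ℂ) (h0 : p 0 = 0)
    (hp : phi n p p = 0) : p = 0 := by
  rw [phi_self, h0] at hp
  simp only [map_zero, Complex.ofReal_zero, neg_zero, zero_add] at hp
  have h2 : ((∑ i : Fin n, Complex.normSq (p i.succ) : ℝ) : ℂ) = 0 := by push_cast; exact hp
  rw [Complex.ofReal_eq_zero] at h2
  have h3 := (Finset.sum_eq_zero_iff_of_nonneg (fun i _ => Complex.normSq_nonneg _)).1 h2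
  funext i
  rcases Fin.eq_zero_or_eq_succ i with rfl | ⟨j, rfl⟩
  · exact h0
  · exact Complex.normSq_eq_zero.1 (h3 j (Finset.mem_univ j))

/-- Two `J`-orthogonal isotropic vectors are linearly dependent (signature `(n,1)`). -/
lemma isotropic_dep (u v : Fin (n+1) → ℂ) (hu : phi n u u = 0) (hv : phi n v v = 0)
    (huv : phi n u v = 0) (hu0 : u ≠ 0) : ∃ c : ℂ, v = c • u := by
  have h0 : u 0 ≠ 0 := fun h => hu0 (eq_zero_of_isotropic_head u h hu)
  refine ⟨v 0 / u 0, ?_⟩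
  have hvu : phi n v u = 0 := by rw [phi_conj, huv, map_zero]
  set c : ℂ := v 0 / u 0 with hc
  have hw : v - c • u = 0 := by
    apply eq_zero_of_isotropic_head
    · simp only [Pi.sub_apply, Pi.smul_apply, smul_eq_mul, hc]
      field_simp
      simp
    · rw [phi_sub_left, phi_sub_right, phi_sub_right, phi_smul_left, phi_smul_right,
        phi_smul_left, phi_smul_right, hu, hv, huv, hvu]
      ring
  exact sub_eq_zero.1 hw

lemma stardot_self_eq_zero {k : Type*} [Fintype k] (v : k → ℂ) (h : star v ⬝ᵥ v = 0) : v = 0 := by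
  have h1 : ((∑ i, Complex.normSq (v i) : ℝ) : ℂ) = 0 := by
    rw [← h]
    push_cast
    simp [dotProduct, Complex.normSq_eq_conj_mul_self]
  rw [Complex.ofReal_eq_zero] at h1
  have h2 := (Finset.sum_eq_zero_iff_of_nonneg (fun i _ => Complex.normSq_nonneg _)).1 h1
  funext i
  exact Complex.normSq_eq_zero.1 (h2 i (Finset.mem_univ i))

section rankone
variable {k : Type*} [Fintype k] [DecidableEq k]

lemma vecMulVec_mulVec (a b v : k → ℂ) :
    (vecMulVec a b) *ᵥ v = (b ⬝ᵥ v) • a := by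
  funext i
  simp [vecMulVec, mulVec, dotProduct, Finset.mul_sum, Finset.sum_mul, mul_assoc]
  exact Finset.sum_congr rfl fun j _ => by ring

lemma mul_vecMulVec (A : Matrix k k ℂ) (a b : k → ℂ) :
    A * vecMulVec a b = vecMulVec (A *ᵥ a) b := by
  funext i j
  simp [vecMulVec, mul_apply, mulVec, dotProduct, Finset.sum_mul]
  exact Finset.sum_congr rfl fun l _ => by ring

lemma vecMulVec_mul (a b : k → ℂ) (A : Matrix k k ℂ) :
    vecMulVec a b * A = vecMulVec a (b ᵥ* A) := by
  funext i j
  simp [vecMulVec, mul_apply, vecMul, dotProduct, Finset.mul_sum]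
  exact Finset.sum_congr rfl fun l _ => by ring

lemma vecMulVec_mul_vecMulVec (a b c d : k → ℂ) :
    vecMulVec a b * vecMulVec c d = (b ⬝ᵥ c) • vecMulVec a d := by
  rw [vecMulVec_mul]
  funext i j
  simp [vecMulVec, vecMul, dotProduct, Finset.mul_sum, Finset.sum_mul]
  exact Finset.sum_congr rfl fun l _ => by ring

lemma conjTranspose_vecMulVec (a b : k → ℂ) :
    (vecMulVec a b)ᴴ = vecMulVec (star b) (star a) := by
  funext i j
  simp [vecMulVec, conjTranspose_apply, mul_comm]

lemma vecMulVec_sub_left (a a' b : k → ℂ) :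
    vecMulVec (a - a') b = vecMulVec a b - vecMulVec a' b := by
  funext i j; simp [vecMulVec, sub_mul]

lemma vecMulVec_sub_right (a b b' : k → ℂ) :
    vecMulVec a (b - b') = vecMulVec a b - vecMulVec a b' := by
  funext i j; simp [vecMulVec, mul_sub]

lemma vecMulVec_add_right (a b b' : k → ℂ) :
    vecMulVec a (b + b') = vecMulVec a b + vecMulVec a b' := by
  funext i j; simp [vecMulVec, mul_add]

lemma vecMulVec_smul_left (c : ℂ) (a b : k → ℂ) :
    vecMulVec (c • a) b = c • vecMulVec a b := by
  funext i j; simp [vecMulVec]; ring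

lemma vecMulVec_smul_right (c : ℂ) (a b : k → ℂ) :
    vecMulVec a (c • b) = c • vecMulVec a b := by
  funext i j; simp [vecMulVec]; ring

lemma eq_of_mulVec_eq {A B : Matrix k k ℂ} (h : ∀ v, A *ᵥ v = B *ᵥ v) : A = B := by
  ext i j
  have := congrFun (h (Pi.single j 1)) i
  simpa [mulVec_single] using this

end rankone

end NVT


open NVT in
/-- A non-vertical translation (unipotent with `(T-1)³ = 0`, `(T-1)² ≠ 0`) in `U(n,1)`
is a product of two involutions in `U(n,1)`. -/
theorem nonvertical_translation_product_two_involutions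
    (n : ℕ) (hn : 1 ≤ n)
    (T : Matrix (Fin (n + 1)) (Fin (n + 1)) ℂ)
    (hT : memU1 n T)
    (hunip : (T - 1) ^ 3 = 0) (hne : (T - 1) ^ 2 ≠ 0) :
    ∃ J₁ J₂ : Matrix (Fin (n + 1)) (Fin (n + 1)) ℂ,
      memU1 n J₁ ∧ memU1 n J₂ ∧
      J₁ * J₁ = 1 ∧ J₂ * J₂ = 1 ∧
      T = J₁ * J₂ := by
  classical
  set N : Matrix (Fin (n+1)) (Fin (n+1)) ℂ := T - 1 with hNdef
  have hT1 : T = N + 1 := by rw [hNdef]; abel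
  have hN3 : N ^ 3 = 0 := hunip
  have hN2ne : N ^ 2 ≠ 0 := hne
  set Ti : Matrix (Fin (n+1)) (Fin (n+1)) ℂ := 1 - N + N ^ 2 with hTidef
  have hN4 : N ^ 3 * N = 0 := by rw [hN3, zero_mul]
  have hTTi : T * Ti = 1 := by
    have h : T * Ti = N ^ 3 + 1 := by rw [hT1, hTidef]; noncomm_ring
    rw [h, hN3, zero_add]
  have hTiT : Ti * T = 1 := by
    have h : Ti * T = N ^ 3 + 1 := by rw [hT1, hTidef]; noncomm_ring
    rw [h, hN3, zero_add]
  have hTmem : Tᴴ * Jform n * T = Jform n := hT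
  have hadjT : Tᴴ * Jform n = Jform n * Ti := by
    calc Tᴴ * Jform n = Tᴴ * Jform n * (T * Ti) := by rw [hTTi, mul_one]
    _ = (Tᴴ * Jform n * T) * Ti := (mul_assoc (Tᴴ * Jform n) T Ti).symm
    _ = Jform n * Ti := by rw [hTmem]
  set B : Matrix (Fin (n+1)) (Fin (n+1)) ℂ := N ^ 2 - N with hBdef
  have hTiB : Ti = B + 1 := by rw [hTidef, hBdef]; abel
  have hadjN : Nᴴ * Jform n = Jform n * B := by
    have h1 : Nᴴ = Tᴴ - 1 := by rw [hNdef, conjTranspose_sub, conjTranspose_one]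
    rw [h1, sub_mul, one_mul, hadjT, hTiB, mul_add, mul_one, add_sub_cancel_right]
  -- the adjoint rules
  have ruleN : ∀ p q, phi n (N *ᵥ p) q = phi n p (B *ᵥ q) := by
    intro p q
    show star (N *ᵥ p) ⬝ᵥ (Jform n *ᵥ q) = star p ⬝ᵥ (Jform n *ᵥ (B *ᵥ q))
    rw [star_mulVec, ← dotProduct_mulVec, mulVec_mulVec, hadjN, ← mulVec_mulVec]
  have hBB : B * B = N ^ 2 := by
    have h : B * B = N ^ 3 * N - N ^ 3 - N ^ 3 + N ^ 2 := by rw [hBdef]; noncomm_ring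
    rw [h, hN4, hN3]; abel
  have hBN : B * N = -(N ^ 2) := by
    have h : B * N = N ^ 3 - N ^ 2 := by rw [hBdef]; noncomm_ring
    rw [h, hN3]; abel
  have hBN2 : B * N ^ 2 = 0 := by
    have h : B * N ^ 2 = N ^ 3 * N - N ^ 3 := by rw [hBdef]; noncomm_ring
    rw [h, hN4, hN3]; abel
  have hN22 : N ^ 2 * N ^ 2 = 0 := by
    have h : N ^ 2 * N ^ 2 = N ^ 3 * N := by noncomm_ring
    rw [h, hN4]
  have hN2N : N ^ 2 * N = 0 := by
    have h : N ^ 2 * N = N ^ 3 := by noncomm_ring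
    rw [h, hN3]
  have hNN2 : N * N ^ 2 = 0 := by
    have h : N * N ^ 2 = N ^ 3 := by noncomm_ring
    rw [h, hN3]
  have rule2 : ∀ p q, phi n ((N ^ 2) *ᵥ p) q = phi n p ((N ^ 2) *ᵥ q) := by
    intro p q
    have h1 : (N ^ 2) *ᵥ p = N *ᵥ (N *ᵥ p) := by rw [mulVec_mulVec, ← pow_two]
    rw [h1, ruleN, ruleN, mulVec_mulVec, hBB]
  -- choose x₀ with N² x₀ ≠ 0
  obtain ⟨i0, j0, hij⟩ : ∃ i j, (N ^ 2) i j ≠ 0 := by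
    by_contra h
    push_neg at h
    exact hN2ne (by ext i j; simpa using h i j)
  set x₀ : Fin (n+1) → ℂ := Pi.single j0 1 with hx₀def
  have hx₀ : (N ^ 2) *ᵥ x₀ ≠ 0 := by
    intro h
    have := congrFun h i0
    rw [hx₀def, mulVec_single] at this
    simp at this
    exact hij this
  set δ₀ : ℂ := phi n x₀ ((N ^ 2) *ᵥ x₀) with hδ₀def
  have hδ₀real : (starRingEnd ℂ) δ₀ = δ₀ := by
    have h1 : phi n ((N ^ 2) *ᵥ x₀) x₀ = (starRingEnd ℂ) δ₀ := by
      rw [phi_conj, hδ₀def]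
    rw [← h1, rule2, hδ₀def]
  have hδ₀ne : δ₀ ≠ 0 := by
    intro hδ0
    set e : Fin (n+1) → ℂ := (N ^ 2) *ᵥ x₀ with hedef
    have he_iso : phi n e e = 0 := by
      rw [hedef, rule2, mulVec_mulVec, hN22]
      simp [phi_zero_right]
    set y : Fin (n+1) → ℂ := Jform n *ᵥ e with hydef
    have h1 : phi n ((N^2) *ᵥ y) ((N^2) *ᵥ y) = 0 := by
      rw [rule2, mulVec_mulVec, hN22]
      simp [phi_zero_right]
    have h2 : phi n e ((N^2) *ᵥ y) = 0 := by
      rw [hedef, rule2, mulVec_mulVec, hN22]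
      simp [phi_zero_right]
    obtain ⟨c, hc⟩ := isotropic_dep e ((N^2) *ᵥ y) he_iso h1 h2 hx₀
    have h3 : phi n x₀ ((N^2) *ᵥ y) = 0 := by
      rw [hc, phi_smul_right, ← hδ₀def, hδ0, mul_zero]
    have h4 : phi n e y = 0 := by rw [hedef, rule2]; exact h3
    have h5 : phi n e y = star e ⬝ᵥ e := by
      show star e ⬝ᵥ (Jform n *ᵥ (Jform n *ᵥ e)) = star e ⬝ᵥ e
      rw [mulVec_mulVec, JJ, one_mulVec]
    rw [h5] at h4
    exact hx₀ (stardot_self_eq_zero e h4)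
  -- normalised cyclic vector x
  set g₀ : ℂ := phi n (N *ᵥ x₀) x₀ with hg₀def
  set a : ℂ := (g₀ - (starRingEnd ℂ) g₀) / (4 * δ₀) with hadef
  set x : Fin (n+1) → ℂ := x₀ + a • (N *ᵥ x₀) with hxdef
  set e1 : Fin (n+1) → ℂ := (N ^ 2) *ᵥ x with he1def
  set e2 : Fin (n+1) → ℂ := N *ᵥ x with he2def
  have he1 : e1 = (N ^ 2) *ᵥ x₀ := by
    rw [he1def, hxdef, mulVec_add, mulVec_smul, mulVec_mulVec, hN2N, zero_mulVec, smul_zero,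
      add_zero]
  have he1ne : e1 ≠ 0 := by rw [he1]; exact hx₀
  have hv1 : phi n (N *ᵥ x₀) ((N^2) *ᵥ x₀) = 0 := by
    rw [ruleN, mulVec_mulVec, hBN2, zero_mulVec, phi_zero_right]
  have hv2 : phi n (N *ᵥ x₀) (N *ᵥ x₀) = -δ₀ := by
    rw [ruleN, mulVec_mulVec, hBN, neg_mulVec, phi_neg_right, hδ₀def]
  have hv3 : phi n ((N^2) *ᵥ x₀) x₀ = δ₀ := by
    rw [rule2, ← hδ₀def]
  have hv4 : phi n ((N^2) *ᵥ x₀) (N *ᵥ x₀) = 0 := by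
    rw [rule2, mulVec_mulVec, hN2N, zero_mulVec, phi_zero_right]
  set δ : ℂ := phi n x e1 with hδdef
  have hδδ₀ : δ = δ₀ := by
    rw [hδdef, he1, hxdef, phi_add_left, phi_smul_left, hv1, mul_zero, add_zero, hδ₀def]
  have hδreal : (starRingEnd ℂ) δ = δ := by rw [hδδ₀]; exact hδ₀real
  have hδne : δ ≠ 0 := by rw [hδδ₀]; exact hδ₀ne
  -- vector identities
  have hNe2 : N *ᵥ e2 = e1 := by rw [he2def, he1def, mulVec_mulVec, ← pow_two]
  have hNe1 : N *ᵥ e1 = 0 := by rw [he1def, mulVec_mulVec, hNN2, zero_mulVec]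
  have hBx : B *ᵥ x = e1 - e2 := by rw [hBdef, sub_mulVec, ← he1def, ← he2def]
  have hBe2 : B *ᵥ e2 = -e1 := by
    rw [he2def, mulVec_mulVec, hBN, neg_mulVec, he1def]
  have hBe1 : B *ᵥ e1 = 0 := by rw [he1def, mulVec_mulVec, hBN2, zero_mulVec]
  -- Gram matrix facts
  have F1 : phi n e1 e1 = 0 := by
    rw [he1def, rule2, mulVec_mulVec, hN22, zero_mulVec, phi_zero_right]
  have F2 : phi n e1 e2 = 0 := by
    rw [he1def, he2def, rule2, mulVec_mulVec, hN2N, zero_mulVec, phi_zero_right]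
  have F2' : phi n e2 e1 = 0 := by rw [phi_conj, F2, map_zero]
  have F3 : phi n e2 e2 = -δ := by
    have h1 : phi n e2 e2 = phi n x (B *ᵥ e2) := by
      conv_lhs => rw [he2def]
      rw [ruleN]
    rw [h1, hBe2, phi_neg_right, ← hδdef]
  have F4 : phi n e1 x = δ := by rw [phi_conj, ← hδdef, hδreal]
  -- the normalisation: phi e2 x = δ/2
  have he2x₀ : e2 = N *ᵥ x₀ + a • ((N^2) *ᵥ x₀) := by
    rw [he2def, hxdef, mulVec_add, mulVec_smul, mulVec_mulVec, ← pow_two]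
  have hconja : (starRingEnd ℂ) a = -a := by
    rw [hadef, map_div₀, map_sub, _root_.map_mul]
    simp only [Complex.conj_conj, hδ₀real, map_ofNat]
    ring
  have hgval : phi n e2 x = g₀ - a * δ₀ + (starRingEnd ℂ) a * δ₀ := by
    rw [he2x₀, hxdef]
    simp only [phi_add_left, phi_add_right, phi_smul_left, phi_smul_right]
    rw [hv2, hv3, hv4, ← hg₀def]
    ring
  have hgsym : phi n e2 x = (g₀ + (starRingEnd ℂ) g₀) / 2 := by
    rw [hgval, hconja, hadef]
    field_simp
    ring
  have hgconj : (starRingEnd ℂ) (phi n e2 x) = phi n e2 x := by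
    rw [hgsym, map_div₀, map_add, Complex.conj_conj, map_ofNat]
    ring
  have hid : phi n e2 x = δ - (starRingEnd ℂ) (phi n e2 x) := by
    have h1 : phi n (N *ᵥ x) x = phi n x (B *ᵥ x) := ruleN x x
    rw [hBx, phi_sub_right, ← hδdef, ← he2def, phi_conj x e2] at h1
    exact h1
  have F5 : phi n e2 x = δ / 2 := by
    have h := hid
    rw [hgconj] at h
    linear_combination h / 2
  have F5' : phi n x e2 = δ / 2 := by
    rw [phi_conj, F5, map_div₀, hδreal, map_ofNat]
  -- the reflection vector u and reflection σ
  set u : Fin (n+1) → ℂ := (1/2 : ℂ) • e1 - e2 with hudef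
  have huu : phi n u u = -δ := by
    rw [hudef]
    simp only [phi_sub_left, phi_sub_right, phi_smul_left, phi_smul_right]
    rw [F1, F2, F2', F3]
    ring
  have hNu : N *ᵥ u = -e1 := by
    rw [hudef, mulVec_sub, mulVec_smul, hNe1, hNe2, smul_zero, zero_sub]
  have hBu : B *ᵥ u = e1 := by
    rw [hudef, mulVec_sub, mulVec_smul, hBe1, hBe2, smul_zero, zero_sub, neg_neg]
  have hTu : T *ᵥ u = u - e1 := by
    rw [hT1, add_mulVec, one_mulVec, hNu]
    abel
  have hTiu : Ti *ᵥ u = u + e1 := by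
    rw [hTiB, add_mulVec, one_mulVec, hBu]
    abel
  have hphie1u : phi n e1 u = 0 := by
    rw [hudef, phi_sub_right, phi_smul_right, F1, F2, mul_zero, sub_zero]
  set m : Fin (n+1) → ℂ := star (Jform n *ᵥ u) with hmdef
  set m1 : Fin (n+1) → ℂ := star (Jform n *ᵥ e1) with hm1def
  set m2 : Fin (n+1) → ℂ := star (Jform n *ᵥ e2) with hm2def
  have hm : m = (1/2 : ℂ) • m1 - m2 := by
    rw [hmdef, hudef, mulVec_sub, mulVec_smul, star_sub, star_smul, ← hm1def, ← hm2def]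
    norm_num
  have hdot : ∀ v, m ⬝ᵥ v = phi n u v := fun v => by rw [hmdef]; exact stardot u v
  have hdot1 : ∀ v, m1 ⬝ᵥ v = phi n e1 v := fun v => by rw [hm1def]; exact stardot e1 v
  have hdot2 : ∀ v, m2 ⬝ᵥ v = phi n e2 v := fun v => by rw [hm2def]; exact stardot e2 v
  set R : Matrix (Fin (n+1)) (Fin (n+1)) ℂ := vecMulVec u m with hRdef
  set c : ℂ := 2 / δ with hcdef
  set σ : Matrix (Fin (n+1)) (Fin (n+1)) ℂ := 1 + c • R with hσdef
  have hcoef : c + c + c * c * -δ = 0 := by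
    rw [hcdef]; field_simp; ring
  have hRR : R * R = (-δ) • R := by
    rw [hRdef, NVT.vecMulVec_mul_vecMulVec, hdot u, huu]
  have hσσ : σ * σ = 1 := by
    have h1 : σ * σ = 1 + (c + c + c * c * -δ) • R := by
      rw [hσdef, add_mul, one_mul, mul_add, mul_one, Matrix.smul_mul, Matrix.mul_smul,
        smul_smul, hRR, smul_smul, add_smul, add_smul, mul_assoc]
      abel
    rw [h1, hcoef, zero_smul, add_zero]
  -- σ is in U(n,1)
  have hcstar : star c = c := by
    have : (starRingEnd ℂ) c = c := by rw [hcdef, map_div₀, map_ofNat, hδreal]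
    exact this
  have hσH : σᴴ = 1 + c • vecMulVec (Jform n *ᵥ u) (star u) := by
    rw [hσdef, conjTranspose_add, conjTranspose_one, conjTranspose_smul, hRdef,
      NVT.conjTranspose_vecMulVec, hmdef, star_star, hcstar]
  have hσU : σᴴ * Jform n * σ = Jform n := by
    set W : Matrix (Fin (n+1)) (Fin (n+1)) ℂ := vecMulVec (Jform n *ᵥ u) m with hWdef
    have hVJ : vecMulVec (Jform n *ᵥ u) (star u) * Jform n = W := by
      rw [NVT.vecMulVec_mul, starvecmul, ← hmdef, hWdef]
    have hJR : Jform n * R = W := by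
      rw [hRdef, NVT.mul_vecMulVec, hWdef]
    have hWR : W * R = (-δ) • W := by
      rw [hWdef, hRdef, NVT.vecMulVec_mul_vecMulVec, hdot u, huu]
    have h1 : σᴴ * Jform n * σ = Jform n + (c + c + c * c * -δ) • W := by
      have hA : σᴴ * Jform n = Jform n + c • W := by
        rw [hσH, add_mul, one_mul, Matrix.smul_mul, hVJ]
      rw [hA, hσdef, mul_add, mul_one]
      rw [Matrix.mul_smul, add_mul, Matrix.smul_mul, hJR, hWR, smul_smul, smul_add,
        smul_smul]
      rw [add_smul, add_smul, mul_assoc]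
      abel
    rw [h1, hcoef, zero_smul, add_zero]
  -- structure lemma: vectors orthogonal to e1, e2 are killed by N
  have SL : ∀ w, phi n e1 w = 0 → phi n e2 w = 0 → N *ᵥ w = 0 := by
    intro w hw1 hw2
    have step1 : (N^2) *ᵥ w = 0 := by
      have hiso : phi n ((N^2) *ᵥ w) ((N^2) *ᵥ w) = 0 := by
        rw [rule2, mulVec_mulVec, hN22, zero_mulVec, phi_zero_right]
      have horth : phi n e1 ((N^2) *ᵥ w) = 0 := by
        rw [he1def, rule2, mulVec_mulVec, hN22, zero_mulVec, phi_zero_right]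
      obtain ⟨c1, hc1⟩ := isotropic_dep e1 ((N^2) *ᵥ w) F1 hiso horth he1ne
      have ha : phi n ((N^2) *ᵥ w) x = (starRingEnd ℂ) c1 * δ := by
        rw [hc1, phi_smul_left, F4]
      have hb : phi n ((N^2) *ᵥ w) x = 0 := by
        rw [rule2, ← he1def, phi_conj, hw1, map_zero]
      rw [hb] at ha
      have hc1c : (starRingEnd ℂ) c1 = 0 := by
        rcases mul_eq_zero.mp ha.symm with h | h
        · exact h
        · exact absurd h hδne
      have hc10 : c1 = 0 := by
        have := congrArg (starRingEnd ℂ) hc1c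
        simpa using this
      rw [hc1, hc10, zero_smul]
    have hiso2 : phi n (N *ᵥ w) (N *ᵥ w) = 0 := by
      rw [ruleN, mulVec_mulVec, hBN, neg_mulVec, step1, neg_zero, phi_zero_right]
    have horth2 : phi n e1 (N *ᵥ w) = 0 := by
      rw [he1def, rule2, mulVec_mulVec, hN2N, zero_mulVec, phi_zero_right]
    obtain ⟨c2, hc2⟩ := isotropic_dep e1 (N *ᵥ w) F1 hiso2 horth2 he1ne
    have ha : phi n (N *ᵥ w) x = (starRingEnd ℂ) c2 * δ := by
      rw [hc2, phi_smul_left, F4]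
    have hb : phi n (N *ᵥ w) x = 0 := by
      rw [ruleN, hBx, phi_sub_right, phi_conj w e1, phi_conj w e2, hw1, hw2]
      simp
    rw [hb] at ha
    have hc2c : (starRingEnd ℂ) c2 = 0 := by
      rcases mul_eq_zero.mp ha.symm with h | h
      · exact h
      · exact absurd h hδne
    have hc20 : c2 = 0 := by
      have := congrArg (starRingEnd ℂ) hc2c
      simpa using this
    rw [hc2, hc20, zero_smul]
  -- the key identity
  have hDS : Ti - T = N ^ 2 - N - N := by rw [hTidef, hT1]; abel
  have hstar : c • (vecMulVec e1 m2 - vecMulVec e2 m1) = Ti - T := by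
    apply eq_of_mulVec_eq
    intro v
    rw [hDS, sub_mulVec, sub_mulVec, smul_mulVec, sub_mulVec, NVT.vecMulVec_mulVec,
      NVT.vecMulVec_mulVec, hdot1, hdot2]
    set aa : ℂ := phi n e1 v / δ with haadef
    set bb : ℂ := aa / 2 - phi n e2 v / δ with hbbdef
    set w : Fin (n+1) → ℂ := v - aa • x - bb • e2 with hwdef
    have hphi1 : phi n e1 v = aa * δ := by
      rw [haadef]; field_simp
    have hphi2 : phi n e2 v = aa * (δ/2) - bb * δ := by
      rw [hbbdef]; field_simp; ring
    have hw1 : phi n e1 w = 0 := by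
      rw [hwdef, phi_sub_right, phi_sub_right, phi_smul_right, phi_smul_right, F4, F2,
        hphi1, mul_zero, sub_zero, sub_self]
    have hw2 : phi n e2 w = 0 := by
      rw [hwdef, phi_sub_right, phi_sub_right, phi_smul_right, phi_smul_right, F5, F3,
        hphi2]
      ring
    have hNw := SL w hw1 hw2
    have hvw : v = w + aa • x + bb • e2 := by rw [hwdef]; abel
    have hNv : N *ᵥ v = aa • e2 + bb • e1 := by
      conv_lhs => rw [hvw]
      rw [mulVec_add, mulVec_add, mulVec_smul, mulVec_smul, hNw, hNe2, ← he2def, zero_add]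
    have hN2v : (N^2) *ᵥ v = aa • e1 := by
      have h' : (N^2) *ᵥ v = N *ᵥ (N *ᵥ v) := by rw [mulVec_mulVec, ← pow_two]
      rw [h', hNv, mulVec_add, mulVec_smul, mulVec_smul, hNe2, hNe1, smul_zero, add_zero]
    rw [hphi1, hphi2, hNv, hN2v]
    match_scalars <;> simp only [hcdef] <;> field_simp <;> ring
  -- σ T σ = T⁻¹
  have hmT : m ᵥ* T = m + m1 := by
    have h1 : m ᵥ* T = star (Tᴴ *ᵥ (Jform n *ᵥ u)) := by
      rw [star_mulVec, conjTranspose_conjTranspose, hmdef]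
    rw [h1, mulVec_mulVec, hadjT, ← mulVec_mulVec, hTiu, mulVec_add, star_add, ← hmdef,
      ← hm1def]
  have hTR : T * R = R - vecMulVec e1 m := by
    rw [hRdef, NVT.mul_vecMulVec, hTu, vecMulVec_sub_left]
  have hRT : R * T = R + vecMulVec u m1 := by
    rw [hRdef, NVT.vecMulVec_mul, hmT, vecMulVec_add_right]
  have hRTR : R * T * R = (-δ) • R := by
    rw [hRT, add_mul, hRR, hRdef, NVT.vecMulVec_mul_vecMulVec, hdot1, hphie1u, zero_smul,
      add_zero]
  have hexp2 : vecMulVec u m1 - vecMulVec e1 m = vecMulVec e1 m2 - vecMulVec e2 m1 := by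
    rw [hudef, hm, vecMulVec_sub_left, vecMulVec_smul_left, vecMulVec_sub_right,
      vecMulVec_smul_right]
    abel
  have hσTσ : σ * T * σ = Ti := by
    have h1 : σ * T * σ = T + c • (vecMulVec u m1 - vecMulVec e1 m)
        + (c + c + c * c * -δ) • R := by
      have hA : σ * T = T + c • (R * T) := by
        rw [hσdef, add_mul, one_mul, Matrix.smul_mul]
      rw [hA, hσdef, mul_add, mul_one, add_mul]
      rw [Matrix.mul_smul, hTR, Matrix.smul_mul, Matrix.mul_smul, hRTR, hRT]
      rw [smul_smul, smul_smul, smul_add, smul_sub, smul_sub]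
      rw [add_smul, add_smul, mul_assoc]
      abel
    rw [h1, hcoef, zero_smul, add_zero, hexp2, hstar]
    abel
  -- assembly
  refine ⟨σ, σ * T, hσU, ?_, hσσ, ?_, ?_⟩
  · show (σ * T)ᴴ * Jform n * (σ * T) = Jform n
    have h1 : (σ * T)ᴴ * Jform n * (σ * T) = Tᴴ * (σᴴ * Jform n * σ) * T := by
      rw [conjTranspose_mul]
      noncomm_ring
    rw [h1, hσU]
    exact hTmem
  · show σ * T * (σ * T) = 1
    have h1 : σ * T * (σ * T) = (σ * T * σ) * T := by noncomm_ring
    rw [h1, hσTσ, hTiT]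
  · rw [← mul_assoc, hσσ, one_mul]
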